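/- Let T be a P_4-induced-saturated trigraph containing a gray edge uv, and let x, y, z be vertices of T distinct from u and v such that: xu and xv are black; yu and yv are white; zu is black and zv is white. Then the edge zx is black and the edge zy is white. -/

import Mathlib

open SimpleGraph

/-- A trigraph: the pairs of distinct vertices are partitioned into black edges,
gray edges, and (implicitly) white edges. -/
structure Trigraph (V : Type*) where
  /-- the graph of black edges -/
  black : SimpleGraph V
  /-- the graph of gray edges -/
  gray : SimpleGraph V
  /-- no pair is simultaneously black and gray -/
  disjoint : ∀ u v : V, ¬ (black.Adj u v ∧ gray.Adj u v)

namespace Trigraph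

variable {V : Type*} {W : Type*}

/-- `u v` is a white edge of `T`: the vertices are distinct and joined by neither a
black edge nor a gray edge. -/
def White (T : Trigraph V) (u v : V) : Prop :=
  u ≠ v ∧ ¬ T.black.Adj u v ∧ ¬ T.gray.Adj u v

/-- A realization of a trigraph is a graph containing every black edge and contained
in the union of the black and gray edges. -/
def IsRealization (T : Trigraph V) (R : SimpleGraph V) : Prop :=
  T.black ≤ R ∧ R ≤ T.black ⊔ T.gray

/-- The graph with the single edge `uv` (empty if `u = v`). -/
def single (u v : V) : SimpleGraph V := SimpleGraph.fromEdgeSet {s(u, v)}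

/-- The trigraph obtained from `T` by recoloring the pair `uv` gray. -/
def flip (T : Trigraph V) (u v : V) : Trigraph V where
  black := T.black \ single u v
  gray := T.gray ⊔ single u v
  disjoint := by
    intro a b h
    have := T.disjoint a b
    simp only [SimpleGraph.sdiff_adj, SimpleGraph.sup_adj] at h
    tauto

/-- `G` contains an induced copy of `H`. -/
def HasInducedCopy (H : SimpleGraph W) (G : SimpleGraph V) : Prop :=
  Nonempty (H ↪g G)

/-- A trigraph `T` is `H`-induced-saturated if no realization of `T` contains an
induced copy of `H`, but whenever any black or white edge of `T` is recolored gray,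
some realization of the resulting trigraph contains an induced copy of `H`. -/
def IsIndSat (H : SimpleGraph W) (T : Trigraph V) : Prop :=
  (∀ R : SimpleGraph V, T.IsRealization R → ¬ HasInducedCopy H R) ∧
  (∀ u v : V, u ≠ v → ¬ T.gray.Adj u v →
    ∃ R : SimpleGraph V, (T.flip u v).IsRealization R ∧ HasInducedCopy H R)

/-- The induced saturation number: the least number of gray edges in an
`H`-induced-saturated trigraph on `n` vertices (`⊤` if none exists). -/
noncomputable def indsat (n : ℕ) (H : SimpleGraph W) : ℕ∞ :=
  sInf {k : ℕ∞ | ∃ T : Trigraph (Fin n), IsIndSat H T ∧ (T.gray.edgeSet.ncard : ℕ∞) = k}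

/-- `G` contains a (not necessarily induced) copy of `H` as a subgraph. -/
def HasSubCopy (H : SimpleGraph W) (G : SimpleGraph V) : Prop :=
  ∃ f : W → V, Function.Injective f ∧ ∀ a b : W, H.Adj a b → G.Adj (f a) (f b)

/-- A graph `G` is `H`-saturated if it contains no copy of `H` but adding any new
edge creates a copy of `H`. -/
def IsSat (H : SimpleGraph W) (G : SimpleGraph V) : Prop :=
  ¬ HasSubCopy H G ∧
  ∀ u v : V, u ≠ v → ¬ G.Adj u v → HasSubCopy H (G ⊔ single u v)

/-- The saturation number: the least number of edges of an `H`-saturated graph on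
`n` vertices (`⊤` if none exists). -/
noncomputable def satNum (n : ℕ) (H : SimpleGraph W) : ℕ∞ :=
  sInf {k : ℕ∞ | ∃ G : SimpleGraph (Fin n), IsSat H G ∧ (G.edgeSet.ncard : ℕ∞) = k}

/-- The subtrigraph induced on a set of vertices. -/
def induce (s : Set V) (T : Trigraph V) : Trigraph s where
  black := T.black.induce s
  gray := T.gray.induce s
  disjoint := by
    intro a b h
    exact T.disjoint a b (by simpa using h)

/-- The complement trigraph: black and white edges are exchanged, gray edges are
unchanged. -/
def compl (T : Trigraph V) : Trigraph V where
  black := (T.black ⊔ T.gray)ᶜ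
  gray := T.gray
  disjoint := by
    intro a b h
    rcases h with ⟨hb, hg⟩
    rw [SimpleGraph.compl_adj] at hb
    exact hb.2 ((SimpleGraph.sup_adj _ _ _ _).mpr (Or.inr hg))

end Trigraph

lemma p4_copy {V : Type*} (G : SimpleGraph V) (a b c d : V)
    (hac' : a ≠ c) (had' : a ≠ d) (hbd' : b ≠ d)
    (hab : G.Adj a b) (hbc : G.Adj b c) (hcd : G.Adj c d)
    (hac : ¬ G.Adj a c) (had : ¬ G.Adj a d) (hbd : ¬ G.Adj b d) :
    Trigraph.HasInducedCopy (SimpleGraph.pathGraph 4) G := by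
  refine ⟨⟨⟨![a, b, c, d], ?_⟩, ?_⟩⟩
  · intro i j hij
    fin_cases i <;> fin_cases j <;>
      simp_all [hab.ne, hbc.ne, hcd.ne, hab.ne', hbc.ne', hcd.ne', hac'.symm, had'.symm,
        hbd'.symm]
  · intro i j
    have hca : ¬ G.Adj c a := fun h => hac h.symm
    have hda : ¬ G.Adj d a := fun h => had h.symm
    have hdb : ¬ G.Adj d b := fun h => hbd h.symm
    have hba : G.Adj b a := hab.symm
    have hcb : G.Adj c b := hbc.symm
    have hdc : G.Adj d c := hcd.symm
    fin_cases i <;> fin_cases j <;>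
      simp [SimpleGraph.pathGraph_adj, hab, hbc, hcd, hab.symm, hbc.symm, hcd.symm,
        hac, had, hbd, hca, hda, hdb, G.irrefl] <;>
      assumption

/-- In a `P_4`-induced-saturated trigraph with a gray edge `uv`, if
`x` is black to both `u` and `v`, `y` is white to both `u` and `v`, and `z` is
black to `u` and white to `v`, then `zx` is black and `zy` is white. -/
theorem z_edges {V : Type*} (T : Trigraph V)
    (hT : Trigraph.IsIndSat (SimpleGraph.pathGraph 4) T)
    (u v x y z : V) (huv : T.gray.Adj u v)
    (hxu : T.black.Adj x u) (hxv : T.black.Adj x v)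
    (hyu : T.White y u) (hyv : T.White y v)
    (hzu : T.black.Adj z u) (hzv : T.White z v) :
    T.black.Adj z x ∧ T.White z y := by
  have huvb : ¬ T.black.Adj u v := fun h => T.disjoint u v ⟨h, huv⟩
  constructor
  · by_contra h
    have hzx : z ≠ x := fun he => hzv.2.1 (he ▸ hxv)
    have hreal : T.IsRealization T.black := ⟨le_refl _, le_sup_left⟩
    exact hT.1 T.black hreal
      (p4_copy T.black z u x v hzx hzv.1 huv.ne hzu hxu.symm hxv h hzv.2.1 huvb)
  · by_contra h
    have hzy : z ≠ y := fun he => hyu.2.1 (he ▸ hzu)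
    have hzyadj : T.black.Adj z y ∨ T.gray.Adj z y := by
      by_contra h'
      push_neg at h'
      exact h ⟨hzy, h'.1, h'.2⟩
    set R := T.black ⊔ Trigraph.single z y ⊔ Trigraph.single u v with hR
    have hsingzy : (Trigraph.single z y).Adj z y := by
      simp [Trigraph.single, hzy]
    have hsinguv : (Trigraph.single u v).Adj u v := by
      simp [Trigraph.single, huv.ne]
    have hle : R ≤ T.black ⊔ T.gray := by
      refine sup_le (sup_le le_sup_left ?_) ?_
      · intro a b hab
        simp only [Trigraph.single, SimpleGraph.fromEdgeSet_adj, Set.mem_singleton_iff] at hab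
        rcases Sym2.eq_iff.mp hab.1 with ⟨rfl, rfl⟩ | ⟨rfl, rfl⟩
        · exact hzyadj.elim (fun h => Or.inl h) (fun h => Or.inr h)
        · exact hzyadj.elim (fun h => Or.inl h.symm) (fun h => Or.inr h.symm)
      · intro a b hab
        simp only [Trigraph.single, SimpleGraph.fromEdgeSet_adj, Set.mem_singleton_iff] at hab
        rcases Sym2.eq_iff.mp hab.1 with ⟨rfl, rfl⟩ | ⟨rfl, rfl⟩
        · exact Or.inr huv
        · exact Or.inr huv.symm
    have hreal : T.IsRealization R := ⟨le_trans le_sup_left le_sup_left, hle⟩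
    have hwhite : ∀ a b : V, T.White a b → ¬ R.Adj a b := by
      intro a b hw hab
      rcases hle hab with h1 | h2
      · exact hw.2.1 h1
      · exact hw.2.2 h2
    refine hT.1 R hreal (p4_copy R y z u v hyu.1 hyv.1 hzv.1 ?_ ?_ ?_ ?_ ?_ ?_)
    · exact Or.inl (Or.inr hsingzy.symm)
    · exact Or.inl (Or.inl hzu)
    · exact Or.inr hsinguv
    · exact hwhite y u hyu
    · exact hwhite y v hyv
    · exact hwhite z v hzv
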